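/- On the even part Λ₊ of ⋀(ℂ^g) the Hodge star satisfies λ_A ∗ = − ∗ a_A and a_A ∗ = ∗ λ_A, while on the odd part Λ₋ it satisfies λ_A ∗ = ∗ a_A and a_A ∗ = − ∗ λ_A. -/

import Mathlib

open scoped BigOperators
noncomputable section

/-- Model of the exterior algebra Λ = ⋀(ℂ^g): coefficient functions on subsets of `Fin g`,
with the Hermitian inner product making the basis monomials orthonormal. -/
abbrev Lam (g : ℕ) : Type := EuclideanSpace ℂ (Finset (Fin g))

/-- Sign such that `e_S ∧ e_T = wsign S T • e_{S ∪ T}` for disjoint `S`, `T`. -/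
def wsign (g : ℕ) (S T : Finset (Fin g)) : ℂ :=
  (-1) ^ (∑ s ∈ S, (T.filter (fun t => t < s)).card)

/-- The Hodge star `∗` with respect to the volume form `ω = e₁ ∧ … ∧ e_g`,
characterized by `⟨∗β, α⟩ = ⟨ω, β̄ ∧ α⟩`; concretely `(∗ψ) T = wsign Tᶜ T * ψ Tᶜ`. -/
def hodge (g : ℕ) : Lam g →ₗ[ℂ] Lam g where
  toFun ψ := WithLp.toLp 2 (fun T => wsign g Tᶜ T * ψ Tᶜ)
  map_add' x y := by ext T; simp [mul_add]
  map_smul' c x := by ext T; simp; ring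

/-- Creation operator λ_A = e_A ∧ ·. -/
def crea (g : ℕ) (A : Fin g) : Lam g →ₗ[ℂ] Lam g where
  toFun ψ := WithLp.toLp 2 (fun T : Finset (Fin g) =>
    if A ∈ T then (-1 : ℂ) ^ ((T.filter (fun t => t < A)).card) * ψ (T.erase A) else 0)
  map_add' x y := by ext T; by_cases h : A ∈ T <;> simp [h, mul_add]
  map_smul' c x := by ext T; by_cases h : A ∈ T <;> simp [h]; ring

/-- Annihilation operator a_A = λ_A† (interior product with e_A). -/
def anni (g : ℕ) (A : Fin g) : Lam g →ₗ[ℂ] Lam g where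
  toFun ψ := WithLp.toLp 2 (fun T : Finset (Fin g) =>
    if A ∈ T then 0 else (-1 : ℂ) ^ ((T.filter (fun t => t < A)).card) * ψ (insert A T))
  map_add' x y := by ext T; by_cases h : A ∈ T <;> simp [h, mul_add]
  map_smul' c x := by ext T; by_cases h : A ∈ T <;> simp [h]; ring

/-- Fermion parity operator `(−1)^F`, equal to `(+1)` on Λ₊ and `(−1)` on Λ₋. -/
def parity (g : ℕ) : Lam g →ₗ[ℂ] Lam g where
  toFun ψ := WithLp.toLp 2 (fun T => (-1 : ℂ) ^ T.card * ψ T)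
  map_add' x y := by ext T; simp [mul_add]
  map_smul' c x := by ext T; simp; ring

lemma negpow_congr (a b : ℕ) (h : a % 2 = b % 2) : (-1:ℂ)^a = (-1)^b := by
  rw [← Nat.div_add_mod a 2, ← Nat.div_add_mod b 2, h, pow_add, pow_add, pow_mul, pow_mul]
  norm_num

lemma filter_split {g : ℕ} (A : Fin g) (S : Finset (Fin g)) (hA : A ∉ S) :
    (S.filter (fun t => t < A)).card + (S.filter (fun t => A < t)).card = S.card := by
  conv_rhs => rw [← Finset.card_filter_add_card_filter_not (p := fun t => t < A)]
  congr 2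
  apply Finset.filter_congr
  intro s hs
  have hne : s ≠ A := fun h => hA (h ▸ hs)
  simp only [not_lt, eq_iff_iff]
  exact ⟨le_of_lt, fun h => lt_of_le_of_ne h (Ne.symm hne)⟩

lemma wsign_insert_left (g : ℕ) (A : Fin g) (S U : Finset (Fin g)) (hA : A ∉ S) :
    wsign g (insert A S) U = (-1:ℂ)^((U.filter (fun t => t < A)).card) * wsign g S U := by
  unfold wsign
  rw [Finset.sum_insert hA, pow_add]

lemma wsign_insert_right (g : ℕ) (A : Fin g) (S U : Finset (Fin g)) (hA : A ∉ U) :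
    wsign g S (insert A U) = (-1:ℂ)^((S.filter (fun s => A < s)).card) * wsign g S U := by
  unfold wsign
  rw [← pow_add]
  congr 1
  have h1 : ∀ s : Fin g, ((insert A U).filter (fun t => t < s)).card
      = (if A < s then 1 else 0) + ((U.filter (fun t => t < s)).card) := by
    intro s
    rw [Finset.filter_insert]
    split_ifs with h
    · rw [Finset.card_insert_of_notMem (fun hm => hA (Finset.mem_filter.mp hm).1)]
      omega
    · simp
  rw [Finset.sum_congr rfl (fun s _ => h1 s), Finset.sum_add_distrib]
  congr 1
  rw [Finset.card_filter]

lemma key1 (g : ℕ) (A : Fin g) (ψ : Lam g) (T : Finset (Fin g)) :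
    crea g A (hodge g ψ) T = (-1:ℂ)^(Tᶜ.card) * hodge g (anni g A ψ) T := by
  by_cases h : A ∈ T
  · have hAc : A ∉ Tᶜ := by simp [h]
    have hAe : A ∉ T.erase A := Finset.notMem_erase A T
    simp only [crea, hodge, anni, LinearMap.coe_mk, AddHom.coe_mk, PiLp.toLp_apply, if_pos h, if_neg hAc]
    rw [show ((T.erase A)ᶜ : Finset (Fin g)) = insert A Tᶜ from Finset.compl_erase]
    set S := Tᶜ with hS
    set U := T.erase A with hU
    rw [show T = insert A U from (Finset.insert_erase h).symm,
        wsign_insert_left g A S U hAc, wsign_insert_right g A S U hAe]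
    have hcins : ((insert A U).filter (fun t => t < A)).card
        = (U.filter (fun t => t < A)).card := by
      simp [Finset.filter_insert]
    rw [hcins]
    have hsplit := filter_split A S hAc
    set a := (U.filter (fun t => t < A)).card
    set b := (S.filter (fun s => A < s)).card
    set c := (S.filter (fun t => t < A)).card
    have key : (-1:ℂ)^(a + a) = (-1:ℂ)^(S.card + (b + c)) := negpow_congr _ _ (by omega)
    calc (-1:ℂ)^a * ((-1:ℂ)^a * wsign g S U * ψ (insert A S))
        = (-1:ℂ)^(a+a) * (wsign g S U * ψ (insert A S)) := by rw [pow_add]; ring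
      _ = (-1:ℂ)^(S.card + (b+c)) * (wsign g S U * ψ (insert A S)) := by rw [key]
      _ = (-1:ℂ)^(S.card) * ((-1:ℂ)^b * wsign g S U * ((-1:ℂ)^c * ψ (insert A S))) := by
          rw [pow_add, pow_add]; ring
  · have hAc : A ∈ Tᶜ := by simp [h]
    simp [crea, hodge, anni, h, hAc]

lemma key2 (g : ℕ) (A : Fin g) (ψ : Lam g) (T : Finset (Fin g)) :
    anni g A (hodge g ψ) T = (-1:ℂ)^((Tᶜ.erase A).card) * hodge g (crea g A ψ) T := by
  by_cases h : A ∈ T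
  · have hAc : A ∉ Tᶜ := by simp [h]
    simp [crea, hodge, anni, h, hAc]
  · have hAc : A ∈ Tᶜ := by simp [h]
    simp only [anni, hodge, crea, LinearMap.coe_mk, AddHom.coe_mk, PiLp.toLp_apply, if_neg h, if_pos hAc]
    rw [show ((insert A T)ᶜ : Finset (Fin g)) = Tᶜ.erase A from Finset.compl_insert]
    set S := Tᶜ.erase A with hS
    have hAS : A ∉ S := Finset.notMem_erase A Tᶜ
    rw [show (Tᶜ : Finset (Fin g)) = insert A S from (Finset.insert_erase hAc).symm,
        wsign_insert_right g A S T h, wsign_insert_left g A S T hAS]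
    have hcins : ((insert A S).filter (fun t => t < A)).card
        = (S.filter (fun t => t < A)).card := by
      simp [Finset.filter_insert]
    rw [hcins]
    have hsplit := filter_split A S hAS
    set a := (T.filter (fun t => t < A)).card
    set b := (S.filter (fun s => A < s)).card
    set c := (S.filter (fun t => t < A)).card
    have key : (-1:ℂ)^(a + b) = (-1:ℂ)^(S.card + (a + c)) := negpow_congr _ _ (by omega)
    calc (-1:ℂ)^a * ((-1:ℂ)^b * wsign g S T * ψ S)
        = (-1:ℂ)^(a+b) * (wsign g S T * ψ S) := by rw [pow_add]; ring
      _ = (-1:ℂ)^(S.card + (a+c)) * (wsign g S T * ψ S) := by rw [key]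
      _ = (-1:ℂ)^(S.card) * ((-1:ℂ)^a * wsign g S T * ((-1:ℂ)^c * ψ S)) := by
          rw [pow_add, pow_add]; ring

/-- on the even part `Λ₊` the Hodge star satisfies `λ_A ∗ = −∗ a_A` and
`a_A ∗ = ∗ λ_A`, while on the odd part `Λ₋` it satisfies `λ_A ∗ = ∗ a_A` and
`a_A ∗ = −∗ λ_A`. -/
theorem hodge_crea_anni_on_even_odd (g : ℕ) (A : Fin g) :
    (∀ ψ : Lam g, (∀ T, Odd T.card → ψ T = 0) →
      crea g A (hodge g ψ) = -(hodge g (anni g A ψ)) ∧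
      anni g A (hodge g ψ) = hodge g (crea g A ψ)) ∧
    (∀ ψ : Lam g, (∀ T, Even T.card → ψ T = 0) →
      crea g A (hodge g ψ) = hodge g (anni g A ψ) ∧
      anni g A (hodge g ψ) = -(hodge g (crea g A ψ))) := by
  constructor
  · intro ψ hψ
    constructor
    · ext T
      show crea g A (hodge g ψ) T = -(hodge g (anni g A ψ) T)
      rw [key1]
      rcases Nat.even_or_odd (Tᶜ.card) with he | ho
      · have h0 : hodge g (anni g A ψ) T = 0 := by
          simp only [hodge, anni, LinearMap.coe_mk, AddHom.coe_mk, PiLp.toLp_apply]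
          by_cases hA : A ∈ Tᶜ
          · simp [hA]
          · rw [if_neg hA,
              hψ (insert A Tᶜ) (by rw [Finset.card_insert_of_notMem hA]; exact he.add_one)]
            ring
        rw [h0]; ring
      · rw [ho.neg_one_pow]; ring
    · ext T
      rw [key2]
      rcases Nat.even_or_odd ((Tᶜ.erase A).card) with he | ho
      · rw [he.neg_one_pow, one_mul]
      · have h0 : hodge g (crea g A ψ) T = 0 := by
          simp only [hodge, crea, LinearMap.coe_mk, AddHom.coe_mk, PiLp.toLp_apply]
          by_cases hA : A ∈ Tᶜ
          · rw [if_pos hA, hψ (Tᶜ.erase A) ho]; ring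
          · simp [hA]
        rw [h0]; ring
  · intro ψ hψ
    constructor
    · ext T
      rw [key1]
      rcases Nat.even_or_odd (Tᶜ.card) with he | ho
      · rw [he.neg_one_pow, one_mul]
      · have h0 : hodge g (anni g A ψ) T = 0 := by
          simp only [hodge, anni, LinearMap.coe_mk, AddHom.coe_mk, PiLp.toLp_apply]
          by_cases hA : A ∈ Tᶜ
          · simp [hA]
          · rw [if_neg hA,
              hψ (insert A Tᶜ) (by rw [Finset.card_insert_of_notMem hA]; exact ho.add_one)]
            ring
        rw [h0]; ring
    · ext T
      show anni g A (hodge g ψ) T = -(hodge g (crea g A ψ) T)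
      rw [key2]
      rcases Nat.even_or_odd ((Tᶜ.erase A).card) with he | ho
      · have h0 : hodge g (crea g A ψ) T = 0 := by
          simp only [hodge, crea, LinearMap.coe_mk, AddHom.coe_mk, PiLp.toLp_apply]
          by_cases hA : A ∈ Tᶜ
          · rw [if_pos hA, hψ (Tᶜ.erase A) he]; ring
          · simp [hA]
        rw [h0]; ring
      · rw [ho.neg_one_pow]; ring
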